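/- Let H be a bounded self-adjoint operator on a complex Hilbert space, let ξ ∈ ℝ, δ > 0, ε ≥ 0, and let f be a vector with ‖f‖ = 1. Let φ : ℝ → ℝ be continuous with 0 ≤ φ(t) ≤ 1 for all t and with φ(t) = 0 whenever |t − ξ| > δ. If ‖f − φ(H) f‖ ≤ ε, then ‖Hf − ξf‖ ≤ δ + ‖H − ξ·I‖·ε. -/
import Mathlib


/-- A spectrally localized vector is an approximate eigenfunction: if `φ` is a continuous
function with values in `[0,1]` vanishing outside `[ξ−δ, ξ+δ]` and `‖f − φ(H)f‖ ≤ ε`,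
then `‖Hf − ξf‖ ≤ δ + ‖H − ξI‖·ε`. -/
theorem spectrally_localized_approx_eigenfunction
    {E : Type*} [NormedAddCommGroup E] [InnerProductSpace ℂ E] [CompleteSpace E]
    (H : E →L[ℂ] E) (hH : IsSelfAdjoint H) (ξ δ ε : ℝ) (hδ : 0 < δ) (hε : 0 ≤ ε)
    (f : E) (hf : ‖f‖ = 1)
    (φ : ℝ → ℝ) (hφc : Continuous φ) (hφ0 : ∀ t, 0 ≤ φ t) (hφ1 : ∀ t, φ t ≤ 1)
    (hφsupp : ∀ t, δ < |t - ξ| → φ t = 0)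
    (hloc : ‖f - cfc φ H f‖ ≤ ε) :
    ‖H f - (ξ : ℂ) • f‖ ≤ δ + ‖H - (ξ : ℂ) • (1 : E →L[ℂ] E)‖ * ε := by
  have h3 : cfc (fun t => (t - ξ) * φ t) H = (H - (ξ:ℂ) • 1) * cfc φ H := by
    have hsub : cfc (fun t : ℝ => t - ξ) H = H - (ξ:ℂ) • 1 := by
      rw [cfc_sub _ _ H (by fun_prop) (by fun_prop), cfc_id' ℝ H, cfc_const ξ H]
      simp [Algebra.algebraMap_eq_smul_one]
    rw [cfc_mul _ _ H (by fun_prop) (by fun_prop), hsub]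
  have hψ : ∀ t : ℝ, |(t - ξ) * φ t| ≤ δ := by
    intro t
    rcases le_or_gt |t - ξ| δ with h | h
    · rw [abs_mul, abs_of_nonneg (hφ0 t)]
      nlinarith [abs_nonneg (t - ξ), hφ0 t, hφ1 t]
    · simp [hφsupp t h, hδ.le]
  have hnorm : ‖cfc (fun t => (t - ξ) * φ t) H‖ ≤ δ :=
    norm_cfc_le hδ.le (fun t _ => by rw [Real.norm_eq_abs]; exact hψ t)
  have key : H f - (ξ:ℂ) • f
      = (H - (ξ:ℂ) • 1) (f - cfc φ H f) + (cfc (fun t => (t - ξ) * φ t) H) f := by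
    rw [h3]
    simp only [ContinuousLinearMap.sub_apply, ContinuousLinearMap.mul_apply,
      ContinuousLinearMap.smul_apply, ContinuousLinearMap.one_apply, map_sub]
    abel
  calc ‖H f - (ξ:ℂ) • f‖
      ≤ ‖(H - (ξ:ℂ) • 1) (f - cfc φ H f)‖ + ‖(cfc (fun t => (t - ξ) * φ t) H) f‖ := by
        rw [key]; exact norm_add_le _ _
    _ ≤ ‖H - (ξ:ℂ) • 1‖ * ε + δ * 1 := by
        gcongr
        · exact ((H - (ξ:ℂ) • 1).le_opNorm _).trans (by gcongr)
        · calc ‖(cfc (fun t => (t - ξ) * φ t) H) f‖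
              ≤ ‖cfc (fun t => (t - ξ) * φ t) H‖ * ‖f‖ := ContinuousLinearMap.le_opNorm _ _
            _ ≤ δ * 1 := by rw [hf]; gcongr
    _ = δ + ‖H - (ξ:ℂ) • 1‖ * ε := by ring
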